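/- Let $R$ be a Noetherian ring, $I$ an ideal, $M$ an $I$-filtered module, and $x \in I^m$ a superficial element of order $m$ for $M$. Then there exists $N$ such that for all $n \geq N$ the sequence $0 \to M/((0:_M x) + M_{n-m}) \xrightarrow{x} M/M_n \to M/(M_n + xM) \to 0$, where the first map is induced by multiplication by $x$, is exact. -/
import Mathlib


universe u

variable {R M : Type u} [CommRing R] [AddCommGroup M] [Module R M]

/-- The map `M/((0 :_M x) + M_{n-m}) → M/Mₙ` induced by multiplication by `x ∈ Iᵐ`. -/
noncomputable def mulByQuotient {I : Ideal R} (F : I.Filtration M) (m : ℕ) (x : R)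
    (hx : x ∈ I ^ m) (n : ℕ) :
    (M ⧸ (LinearMap.ker (LinearMap.lsmul R M x) ⊔ F.N (n - m))) →ₗ[R] M ⧸ F.N n :=
  Submodule.liftQ _ ((F.N n).mkQ ∘ₗ LinearMap.lsmul R M x) <| by
    refine sup_le (fun y hy => ?_) (fun y hy => ?_)
    · simp only [LinearMap.mem_ker] at hy ⊢
      simp [LinearMap.comp_apply, hy]
    · simp only [LinearMap.mem_ker, LinearMap.comp_apply, Submodule.mkQ_apply,
        Submodule.Quotient.mk_eq_zero]
      refine F.antitone (show n ≤ m + (n - m) from le_add_tsub) ?_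
      exact Ideal.Filtration.pow_smul_le F m (n - m) (Submodule.smul_mem_smul hx hy)

/-- The canonical projection `M/Mₙ → M/(Mₙ + xM)`. -/
noncomputable def projQuotient {I : Ideal R} (F : I.Filtration M) (x : R) (n : ℕ) :
    (M ⧸ F.N n) →ₗ[R] M ⧸ (F.N n ⊔ LinearMap.range (LinearMap.lsmul R M x)) :=
  Submodule.mapQ _ _ LinearMap.id <| by simp

/-- Let `R` be Noetherian, `I` an ideal, `M` an `I`-filtered module,
and `x ∈ Iᵐ` a superficial element of order `m` for `M`.  Then there is `N₀` such that
for all `n ≥ N₀` the sequence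
`0 → M/((0 :_M x) + M_{n-m}) → M/Mₙ → M/(Mₙ + xM) → 0`,
where the first map is induced by multiplication by `x` and the second is the canonical
projection, is exact. -/
theorem superficial_exact_sequence [IsNoetherianRing R] [Module.Finite R M]
    (I : Ideal R) (F : I.Filtration M) (hF0 : F.N 0 = ⊤) (hFG : F.submodule.FG)
    (m : ℕ) (hm : 1 ≤ m) (x : R) (hx : x ∈ I ^ m) (c : ℕ)
    (hsup : ∀ n : ℕ, c ≤ n →
      Submodule.comap (LinearMap.lsmul R M x) (F.N (n + m)) ⊓ F.N c = F.N n) :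
    ∃ N₀ : ℕ, ∀ n : ℕ, N₀ ≤ n →
      Function.Injective (mulByQuotient F m x hx n) ∧
      Function.Exact (mulByQuotient F m x hx n) (projQuotient F x n) ∧
      Function.Surjective (projQuotient F x n) := by
  have hFst : F.Stable :=
    (F.submodule_fg_iff_stable (fun i => IsNoetherian.noetherian _)).mp hFG
  set G := F ⊓ I.trivialFiltration (LinearMap.range (LinearMap.lsmul R M x)) with hG
  have hGst : G.Stable := hFst.inter_right _
  obtain ⟨n₀, hn₀⟩ := hGst.exists_pow_smul_eq_of_ge
  refine ⟨max (n₀ + c) (c + m), fun n hn => ?_⟩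
  have hn0c : n₀ + c ≤ n := le_trans (le_max_left _ _) hn
  have hcm : c + m ≤ n := le_trans (le_max_right _ _) hn
  have hmn : m ≤ n := le_trans (Nat.le_add_left _ _) hcm
  have hcnm : c ≤ n - m := Nat.le_sub_of_add_le hcm
  have hcnn₀ : c ≤ n - n₀ := Nat.le_sub_of_add_le (by omega)
  -- key lemma
  have key : ∀ y : M, x • y ∈ F.N n →
      y ∈ LinearMap.ker (LinearMap.lsmul R M x) ⊔ F.N (n - m) := by
    intro y hy
    have h1 : x • y ∈ G.N n := ⟨hy, ⟨y, rfl⟩⟩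
    rw [hn₀ n (by omega)] at h1
    have h2 : I ^ (n - n₀) • G.N n₀ ≤
        Submodule.map (LinearMap.lsmul R M x) (I ^ (n - n₀) • (⊤ : Submodule R M)) := by
      rw [Submodule.map_smul'']
      refine Submodule.smul_mono le_rfl ?_
      refine le_trans inf_le_right ?_
      intro z hz
      simp only [Ideal.trivialFiltration_N, LinearMap.mem_range] at hz
      obtain ⟨w, hw⟩ := hz
      exact ⟨w, trivial, hw⟩
    obtain ⟨z, hz, hxz⟩ := h2 h1
    have hz' : z ∈ F.N (n - n₀) := by
      have h3 := F.pow_smul_le (n - n₀) 0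
      rw [hF0] at h3
      simpa using h3 hz
    have hz2 : z ∈ F.N (n - m) := by
      rw [← hsup (n - m) hcnm]
      refine ⟨?_, F.antitone hcnn₀ hz'⟩
      show (LinearMap.lsmul R M x) z ∈ F.N (n - m + m)
      rw [Nat.sub_add_cancel hmn]
      have : (LinearMap.lsmul R M x) z = x • y := hxz
      rw [this]; exact hy
    have hker : y - z ∈ LinearMap.ker (LinearMap.lsmul R M x) := by
      simp only [LinearMap.mem_ker, LinearMap.lsmul_apply, smul_sub]
      have : x • z = x • y := hxz
      rw [this, sub_self]
    have : y = (y - z) + z := by abel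
    rw [this]
    exact Submodule.add_mem_sup hker hz2
  refine ⟨?_, ?_, ?_⟩
  · -- injectivity
    rw [← LinearMap.ker_eq_bot]
    apply Submodule.ker_liftQ_eq_bot
    intro y hy
    simp only [LinearMap.mem_ker, LinearMap.comp_apply, Submodule.mkQ_apply,
      Submodule.Quotient.mk_eq_zero, LinearMap.lsmul_apply] at hy
    exact key y hy
  · -- exactness
    intro b
    obtain ⟨y, rfl⟩ := Submodule.Quotient.mk_surjective _ b
    constructor
    · intro h
      have hy : y ∈ F.N n ⊔ LinearMap.range (LinearMap.lsmul R M x) := by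
        have : projQuotient F x n (Submodule.Quotient.mk y) = Submodule.Quotient.mk y := by
          simp [projQuotient, Submodule.mapQ_apply]
        rw [this] at h
        exact (Submodule.Quotient.mk_eq_zero _).mp h
      obtain ⟨u, hu, v, hv, rfl⟩ := Submodule.mem_sup.mp hy
      obtain ⟨w, rfl⟩ := hv
      refine ⟨Submodule.Quotient.mk w, ?_⟩
      show Submodule.Quotient.mk (x • w) = _
      rw [Submodule.Quotient.eq]
      simpa using (F.N n).neg_mem hu
    · rintro ⟨a, ha⟩
      obtain ⟨w, rfl⟩ := Submodule.Quotient.mk_surjective _ a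
      have hxw : (Submodule.Quotient.mk (x • w) : M ⧸ F.N n) = Submodule.Quotient.mk y := ha
      rw [Submodule.Quotient.eq] at hxw
      have hy : y ∈ F.N n ⊔ LinearMap.range (LinearMap.lsmul R M x) := by
        have : y = -(x • w - y) + x • w := by abel
        rw [this]
        exact Submodule.add_mem_sup ((F.N n).neg_mem hxw) ⟨w, rfl⟩
      show projQuotient F x n (Submodule.Quotient.mk y) = 0
      have : projQuotient F x n (Submodule.Quotient.mk y) = Submodule.Quotient.mk y := by
        simp [projQuotient, Submodule.mapQ_apply]
      rw [this]
      exact (Submodule.Quotient.mk_eq_zero _).mpr hy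
  · -- surjectivity
    intro b
    obtain ⟨z, rfl⟩ := Submodule.Quotient.mk_surjective _ b
    refine ⟨Submodule.Quotient.mk z, ?_⟩
    simp [projQuotient, Submodule.mapQ_apply]
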